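/- Let p be prime and let H = {(x,y) ∈ (Z/p²Z)² : px = 0 and py = 0} be the non-cyclic Lagrangian of (Z/p²Z)². If A ⊆ (Z/p²Z)² is a tiling complement of H (i.e. (A,H) is a tiling pair) and 0 ∈ A, then A ∩ Z(1̂_A^{sym}) = ∅, i.e. for every a ∈ A, ∑_{a'∈A} e^{2πi⟨a',a⟩_s/p²} ≠ 0. -/

import Mathlib

open Complex

abbrev G (n : ℕ) := ZMod n × ZMod n

def symp {n : ℕ} (x y : G n) : ZMod n := x.1 * y.2 - x.2 * y.1

noncomputable def sF {n : ℕ} (A : Finset (G n)) (ξ : G n) : ℂ :=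
  ∑ a ∈ A, Complex.exp (2 * Real.pi * Complex.I * ((symp a ξ).val : ℂ) / (n : ℂ))

/-- The non-cyclic Lagrangian of `(Z/p²Z)²`: elements of order dividing `p`. -/
def Hp (p : ℕ) : AddSubgroup (G (p ^ 2)) where
  carrier := {g | p • g = 0}
  zero_mem' := by simp
  add_mem' := by
    intro a b ha hb
    simp only [Set.mem_setOf_eq, smul_add] at *
    rw [ha, hb, add_zero]
  neg_mem' := by
    intro a ha
    simp only [Set.mem_setOf_eq, smul_neg] at *
    rw [ha, neg_zero]

def IsTilingPairSub {n : ℕ} (A : Finset (G n)) (H : AddSubgroup (G n)) : Prop :=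
  ∀ g : G n, ∃! q : G n × G n, (q.1 ∈ A ∧ q.2 ∈ H) ∧ q.1 + q.2 = g

open Finset

def nu {n : ℕ} (A : Finset (G n)) (a : G n) (k : ZMod n) : ℕ :=
  (A.filter (fun x => symp x a = k)).card

def mu {n : ℕ} (A : Finset (G n)) (a : G n) (m : ℕ) : ℕ := nu A a (m : ZMod n)

lemma key_linindep (p : ℕ) (hp : p.Prime) (c : ℕ → ℚ)
    (h : ∑ i ∈ Finset.range (p^2 - p), (c i : ℂ) * Complex.exp (2 * Real.pi * Complex.I / ((p^2 : ℕ) : ℂ)) ^ i = 0) :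
    ∀ i < p^2 - p, c i = 0 := by
  set ζ : ℂ := Complex.exp (2 * Real.pi * Complex.I / ((p^2 : ℕ) : ℂ)) with hζdef
  have hn : (p^2 : ℕ) ≠ 0 := pow_ne_zero _ hp.ne_zero
  have hprim : IsPrimitiveRoot ζ (p^2) := Complex.isPrimitiveRoot_exp _ hn
  have hdeg : (minpoly ℚ ζ).natDegree = p^2 - p := by
    rw [← Polynomial.cyclotomic_eq_minpoly_rat hprim (Nat.pos_of_ne_zero hn),
      Polynomial.natDegree_cyclotomic, Nat.totient_prime_pow hp (by norm_num)]
    rw [pow_one, Nat.mul_sub, mul_one, ← pow_two]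
  have hli := linearIndependent_pow (K := ℚ) (S := ℂ) ζ
  rw [Fintype.linearIndependent_iff] at hli
  have := hli (fun i => c i) ?_
  · intro i hi
    exact this ⟨i, by omega⟩
  · rw [hdeg]
    show ∑ i : Fin (p^2-p), (fun m => c m • ζ^m) i.val = 0
    rw [Fin.sum_univ_eq_sum_range (fun m => c m • ζ^m) (p^2-p), ← h]
    apply Finset.sum_congr rfl
    intro i _
    rw [Rat.smul_def]


section helpers
variable (p : ℕ) (hp : p.Prime)

lemma hdvd : p ∣ p ^ 2 := dvd_pow_self p (by norm_num)

/-- reduction mod p -/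
noncomputable def phi (g : G (p^2)) : G p :=
  (ZMod.castHom (hdvd p) (ZMod p) g.1, ZMod.castHom (hdvd p) (ZMod p) g.2)

lemma smul_eq_zero_iff (hp : p.Prime) (x : ZMod (p^2)) :
    p • x = 0 ↔ ZMod.castHom (hdvd p) (ZMod p) x = 0 := by
  haveI : NeZero (p^2) := ⟨pow_ne_zero _ hp.ne_zero⟩
  rw [ZMod.castHom_apply, ZMod.cast_eq_val]
  rw [ZMod.natCast_eq_zero_iff]
  have hx : x = ((x.val : ℕ) : ZMod (p^2)) := (ZMod.natCast_rightInverse x).symm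
  have hpp : p^2 = p * p := pow_two p
  constructor
  · intro h
    rw [nsmul_eq_mul, hx, ← Nat.cast_mul, ZMod.natCast_eq_zero_iff] at h
    obtain ⟨c, hc⟩ := h
    refine ⟨c, Nat.eq_of_mul_eq_mul_left hp.pos ?_⟩
    rw [hc, hpp, mul_assoc]
  · intro h
    rw [nsmul_eq_mul, hx, ← Nat.cast_mul, ZMod.natCast_eq_zero_iff]
    obtain ⟨c, hc⟩ := h
    exact ⟨c, by rw [hc, hpp, mul_assoc]⟩

lemma mem_Hp_iff (hp : p.Prime) (g : G (p^2)) : g ∈ Hp p ↔ phi p g = 0 := by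
  have : g ∈ Hp p ↔ p • g = 0 := Iff.rfl
  rw [this, Prod.ext_iff, Prod.ext_iff]
  simp only [Prod.fst_zero, Prod.snd_zero, Prod.smul_fst, Prod.smul_snd]
  rw [smul_eq_zero_iff p hp g.1, smul_eq_zero_iff p hp g.2]
  exact Iff.rfl

variable (A : Finset (G (p^2))) (hA : IsTilingPairSub A (Hp p))

lemma phi_inj (hp : p.Prime) (hA : IsTilingPairSub A (Hp p)) :
    ∀ a ∈ A, ∀ b ∈ A, phi p a = phi p b → a = b := by
  intro a ha b hb hab
  have hmem : b - a ∈ Hp p := by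
    rw [mem_Hp_iff p hp]
    have : phi p (b - a) = phi p b - phi p a := by
      simp [phi, Prod.ext_iff, map_sub]
    rw [this, hab, sub_self]
  have h1 : ((b, (0 : G (p^2))) : G (p^2) × G (p^2)) = (a, b - a) := (hA b).unique
    ⟨⟨hb, (Hp p).zero_mem⟩, add_zero b⟩ ⟨⟨ha, hmem⟩, by show a + (b - a) = b; ring⟩
  exact ((Prod.ext_iff.mp h1).1).symm

lemma phi_surj (hp : p.Prime) (hA : IsTilingPairSub A (Hp p)) :
    ∀ y : G p, ∃ a ∈ A, phi p a = y := by
  intro y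
  haveI : NeZero p := ⟨hp.ne_zero⟩
  set g : G (p^2) := ((y.1.val : ZMod (p^2)), (y.2.val : ZMod (p^2))) with hg
  obtain ⟨⟨a, h⟩, ⟨⟨haA, haH⟩, hsum⟩, -⟩ := hA g
  refine ⟨a, haA, ?_⟩
  have hphig : phi p g = y := by
    simp only [phi, hg, map_natCast]
    exact Prod.ext (ZMod.natCast_rightInverse y.1) (ZMod.natCast_rightInverse y.2)
  have : phi p g = phi p a + phi p h := by
    rw [← hsum]; simp [phi, Prod.ext_iff, map_add]
  rw [hphig, (mem_Hp_iff p hp h).mp haH, add_zero] at this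
  exact this.symm

end helpers

section counting
variable (p : ℕ)

lemma cast_symp (x a : G (p^2)) :
    ZMod.castHom (hdvd p) (ZMod p) (symp x a) = symp (phi p x) (phi p a) := by
  simp [symp, phi, map_sub, map_mul]

lemma ker_card (hp : p.Prime) [NeZero p] (w : G p) (hw : w ≠ 0) :
    ((Finset.univ : Finset (G p)).filter (fun v => symp v w = 0)).card = p := by
  haveI : Fact p.Prime := ⟨hp⟩
  have hcancel : ∀ x : ZMod p, x ≠ 0 → ∀ t : ZMod p, t * x⁻¹ * x = t := by
    intro x hx t
    rw [mul_assoc, inv_mul_cancel₀ hx, mul_one]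
  have key : ∀ v : G p, v.1 * w.2 - v.2 * w.1 = 0 →
      ∃ t : ZMod p, v = (t * w.1, t * w.2) := by
    intro v hv
    rw [sub_eq_zero] at hv
    by_cases h1 : w.1 ≠ 0
    · refine ⟨v.1 * w.1⁻¹, Prod.ext ?_ ?_⟩ <;> simp only
      · exact (hcancel w.1 h1 v.1).symm
      · symm
        calc v.1 * w.1⁻¹ * w.2 = v.1 * w.2 * w.1⁻¹ := by ring
          _ = v.2 * w.1 * w.1⁻¹ := by rw [hv]
          _ = v.2 * w.1⁻¹ * w.1 := by ring
          _ = v.2 := hcancel w.1 h1 v.2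
    · push_neg at h1
      have h2 : w.2 ≠ 0 := fun h2 => hw (Prod.ext h1 h2)
      have hv1 : v.1 = 0 := by
        have : v.1 * w.2 = 0 := by rw [hv, h1, mul_zero]
        rcases mul_eq_zero.mp this with h | h
        · exact h
        · exact absurd h h2
      exact ⟨v.2 * w.2⁻¹, Prod.ext (by simp [hv1, h1]) (by simp only; exact (hcancel w.2 h2 v.2).symm)⟩
  have himg : (Finset.univ : Finset (G p)).filter (fun v => symp v w = 0) =
      (Finset.univ : Finset (ZMod p)).image (fun t => (t * w.1, t * w.2)) := by
    ext v
    simp only [Finset.mem_filter, Finset.mem_univ, true_and, Finset.mem_image, symp]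
    constructor
    · intro hv
      obtain ⟨t, ht⟩ := key v (Finset.mem_filter_univ v |>.mp hv)
      exact ⟨t, ht.symm⟩
    · rintro ⟨t, -, rfl⟩
      exact (Finset.mem_filter_univ _).mpr (by ring)
  rw [himg, Finset.card_image_of_injective _ ?_, Finset.card_univ, ZMod.card]
  intro s t hst
  rw [Prod.ext_iff] at hst
  by_cases h1 : w.1 ≠ 0
  · have := hst.1
    simp only at this
    exact mul_right_cancel₀ h1 this
  · push_neg at h1
    have h2 : w.2 ≠ 0 := fun h2 => hw (Prod.ext h1 h2)
    have := hst.2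
    simp only at this
    exact mul_right_cancel₀ h2 this

lemma fiber_card (hp : p.Prime) (A : Finset (G (p^2))) (hA : IsTilingPairSub A (Hp p))
    (a : G (p^2)) (hphia : phi p a ≠ 0) :
    (A.filter (fun x => ZMod.castHom (hdvd p) (ZMod p) (symp x a) = 0)).card = p := by
  haveI : NeZero p := ⟨hp.ne_zero⟩
  have hbij : (A.filter (fun x => ZMod.castHom (hdvd p) (ZMod p) (symp x a) = 0)).card =
      ((Finset.univ : Finset (G p)).filter (fun v => symp v (phi p a) = 0)).card := by
    apply Finset.card_bij (i := fun x _ => phi p x)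
    · intro x hx
      simp only [Finset.mem_filter] at hx ⊢
      rw [cast_symp] at hx
      exact ⟨Finset.mem_univ _, hx.2⟩
    · intro x hx y hy hxy
      simp only [Finset.mem_filter] at hx hy
      exact phi_inj p A hp hA x hx.1 y hy.1 hxy
    · intro v hv
      simp only [Finset.mem_filter, Finset.mem_univ, true_and] at hv
      obtain ⟨x, hxA, hx⟩ := phi_surj p A hp hA v
      refine ⟨x, ?_, hx⟩
      simp only [Finset.mem_filter]
      rw [cast_symp, hx]
      exact ⟨hxA, hv⟩
  rw [hbij]
  exact ker_card p hp (phi p a) hphia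

end counting


lemma sF_eq_sum_mu (p : ℕ) (hp : p.Prime) (A : Finset (G (p^2))) (a : G (p^2)) :
    sF A a = ∑ m ∈ Finset.range (p^2),
      (mu A a m : ℂ) * Complex.exp (2 * Real.pi * Complex.I / ((p^2 : ℕ) : ℂ)) ^ m := by
  haveI : NeZero (p^2) := ⟨pow_ne_zero _ hp.ne_zero⟩
  set ζ : ℂ := Complex.exp (2 * Real.pi * Complex.I / ((p^2 : ℕ) : ℂ)) with hζ
  have h1 : sF A a = ∑ x ∈ A, ζ ^ (symp x a).val := by
    apply Finset.sum_congr rfl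
    intro x _
    rw [show (2 * Real.pi * Complex.I * ((symp x a).val : ℂ) / ((p^2 : ℕ) : ℂ))
        = ((symp x a).val : ℕ) * (2 * Real.pi * Complex.I / ((p^2 : ℕ) : ℂ)) by push_cast; ring,
      Complex.exp_nat_mul]
  have h2 : ∑ x ∈ A, ζ ^ (symp x a).val
      = ∑ k : ZMod (p^2), ∑ x ∈ A.filter (fun x => symp x a = k), ζ ^ (symp x a).val := by
    rw [Finset.sum_fiberwise_of_maps_to (fun x _ => Finset.mem_univ (symp x a))]
  have h3 : ∀ k : ZMod (p^2), ∑ x ∈ A.filter (fun x => symp x a = k), ζ ^ (symp x a).val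
      = (nu A a k : ℂ) * ζ ^ k.val := by
    intro k
    rw [Finset.sum_congr rfl (fun x hx => by
      rw [(Finset.mem_filter.mp hx).2]), Finset.sum_const, nsmul_eq_mul]
    rfl
  rw [h1, h2, Finset.sum_congr rfl (fun k _ => h3 k)]
  apply Finset.sum_bij' (i := fun (k : ZMod (p^2)) _ => k.val)
    (j := fun m _ => (m : ZMod (p^2)))
  · intro k _
    exact Finset.mem_range.mpr k.val_lt
  · intro m _
    exact Finset.mem_univ _
  · intro k _
    exact ZMod.natCast_rightInverse k
  · intro m hm
    exact ZMod.val_cast_of_lt (Finset.mem_range.mp hm)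
  · intro k _
    rw [mu, ZMod.natCast_rightInverse k]


lemma mu_const (p : ℕ) (hp : p.Prime) (μ : ℕ → ℕ)
    (hz : ∑ m ∈ Finset.range (p^2),
      (μ m : ℂ) * Complex.exp (2 * Real.pi * Complex.I / ((p^2 : ℕ) : ℂ)) ^ m = 0) :
    ∀ i < p^2 - p, μ i = μ ((p^2 - p) + i % p) := by
  set ζ : ℂ := Complex.exp (2 * Real.pi * Complex.I / ((p^2 : ℕ) : ℂ)) with hζ
  have hprim : IsPrimitiveRoot ζ (p^2) := Complex.isPrimitiveRoot_exp _ (pow_ne_zero _ hp.ne_zero)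
  have hp2 : p ^ 2 = p * p := pow_two p
  have hple : p ≤ p ^ 2 := Nat.le_self_pow (by norm_num) p
  have hp1 : 2 ≤ p := hp.two_le
  set M := p ^ 2 - p with hM
  have hMeq : M = (p - 1) * p := by rw [hM, hp2, Nat.sub_one_mul]
  -- geometric sum
  have hx1 : (ζ ^ p) ≠ 1 := hprim.pow_ne_one_of_pos_of_lt hp.ne_zero (by nlinarith)
  have hgeom : ∑ j ∈ Finset.range p, (ζ ^ p) ^ j = 0 := by
    rw [geom_sum_eq hx1, ← pow_mul, ← hp2, hprim.pow_eq_one, sub_self, zero_div]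
  have hzM : ζ ^ M = -∑ j ∈ Finset.range (p - 1), ζ ^ (j * p) := by
    have h2 : (ζ ^ p) ^ (p - 1) = ζ ^ M := by
      rw [← pow_mul, hMeq, mul_comm]
    have hconv : ∑ j ∈ Finset.range (p - 1), ζ ^ (j * p)
        = ∑ j ∈ Finset.range (p - 1), (ζ ^ p) ^ j :=
      Finset.sum_congr rfl (fun j _ => by rw [← pow_mul, mul_comm])
    have hsucc : ∑ j ∈ Finset.range (p - 1 + 1), (ζ ^ p) ^ j
        = ∑ j ∈ Finset.range (p - 1), (ζ ^ p) ^ j + (ζ ^ p) ^ (p - 1) :=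
      Finset.sum_range_succ _ _
    rw [show p - 1 + 1 = p from by omega] at hsucc
    rw [hconv, ← h2]
    linear_combination hgeom - hsucc
  -- split the sum
  have hsplit : ∑ m ∈ Finset.range (p^2), (μ m : ℂ) * ζ ^ m
      = ∑ m ∈ Finset.range M, (μ m : ℂ) * ζ ^ m
        + ∑ r ∈ Finset.range p, (μ (M + r) : ℂ) * ζ ^ (M + r) := by
    rw [Finset.range_eq_Ico, ← Finset.sum_Ico_consecutive _ (Nat.zero_le M) (by omega : M ≤ p^2)]
    congr 1
    · rw [Finset.range_eq_Ico]
    rw [Finset.sum_Ico_eq_sum_range, show p ^ 2 - M = p from by omega, Finset.range_eq_Ico]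
  -- double sum reindex
  have hdouble : ∑ r ∈ Finset.range p, ∑ j ∈ Finset.range (p-1), (μ (M + r) : ℂ) * ζ ^ (r + j * p)
      = ∑ i ∈ Finset.range M, (μ (M + i % p) : ℂ) * ζ ^ i := by
    rw [← Finset.sum_product']
    apply Finset.sum_bij' (i := fun (rj : ℕ × ℕ) _ => rj.1 + rj.2 * p)
      (j := fun i _ => (i % p, i / p))
    · rintro ⟨r, j⟩ hrj
      simp only [Finset.mem_product, Finset.mem_range] at hrj
      apply Finset.mem_range.mpr
      calc r + j * p < p + j * p := by omega
        _ = (j + 1) * p := by ring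
        _ ≤ (p - 1) * p := Nat.mul_le_mul_right p (by omega)
        _ = M := hMeq.symm
    · intro i hi
      simp only [Finset.mem_range] at hi
      simp only [Finset.mem_product, Finset.mem_range]
      constructor
      · exact Nat.mod_lt _ hp.pos
      · rw [Nat.div_lt_iff_lt_mul hp.pos]
        calc i < M := hi
          _ = (p - 1) * p := hMeq
    · rintro ⟨r, j⟩ hrj
      simp only [Finset.mem_product, Finset.mem_range] at hrj
      simp only [Nat.add_mul_mod_self_right, Nat.add_mul_div_right _ _ hp.pos,
        Nat.mod_eq_of_lt hrj.1, Nat.div_eq_of_lt hrj.1]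
      simp
    · intro i _
      simp only [Nat.mod_add_div']
    · rintro ⟨r, j⟩ hrj
      simp only [Finset.mem_product, Finset.mem_range] at hrj
      simp only [Nat.add_mul_mod_self_right, Nat.mod_eq_of_lt hrj.1]
  -- conclude
  have hkey : ∀ i < p^2 - p, ((μ i : ℚ) - (μ (M + i % p) : ℚ)) = 0 := by
    apply key_linindep p hp
    have expand : ∑ i ∈ Finset.range (p ^ 2 - p),
        ((((μ i : ℚ) - (μ (M + i % p) : ℚ)) : ℚ) : ℂ) * ζ ^ i
        = ∑ i ∈ Finset.range M, (μ i : ℂ) * ζ ^ i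
          - ∑ i ∈ Finset.range M, (μ (M + i % p) : ℂ) * ζ ^ i := by
      rw [← Finset.sum_sub_distrib]
      apply Finset.sum_congr rfl
      intro i _
      push_cast
      ring
    rw [expand, ← hdouble]
    have hlast : ∑ r ∈ Finset.range p, (μ (M + r) : ℂ) * ζ ^ (M + r)
        = -∑ r ∈ Finset.range p, ∑ j ∈ Finset.range (p-1), (μ (M + r) : ℂ) * ζ ^ (r + j * p) := by
      rw [← Finset.sum_neg_distrib]
      apply Finset.sum_congr rfl
      intro r _
      rw [pow_add, hzM, neg_mul, mul_neg, neg_inj, Finset.sum_mul, Finset.mul_sum]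
      exact Finset.sum_congr rfl (fun j _ => by rw [pow_add]; ring)
    rw [hsplit, hlast] at hz
    linear_combination hz
  intro i hi
  have := hkey i hi
  have h2 : (μ i : ℚ) = (μ (M + i % p) : ℚ) := by linarith
  exact_mod_cast h2


lemma count_lemma (p : ℕ) (hp : p.Prime) (A : Finset (G (p^2))) (hA : IsTilingPairSub A (Hp p))
    (a : G (p^2)) (hphia : phi p a ≠ 0) :
    ∑ j ∈ Finset.range p, mu A a (j * p) = p := by
  haveI : NeZero (p^2) := ⟨pow_ne_zero _ hp.ne_zero⟩
  have hp2 : p ^ 2 = p * p := pow_two p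
  have hunion : A.filter (fun x => ZMod.castHom (hdvd p) (ZMod p) (symp x a) = 0)
      = (Finset.range p).biUnion
        (fun j => A.filter (fun x => symp x a = ((j * p : ℕ) : ZMod (p^2)))) := by
    ext x
    simp only [Finset.mem_filter, Finset.mem_biUnion, Finset.mem_range]
    constructor
    · rintro ⟨hxA, hx⟩
      rw [ZMod.castHom_apply, ZMod.cast_eq_val, ZMod.natCast_eq_zero_iff] at hx
      obtain ⟨j, hj⟩ := hx
      refine ⟨j, ?_, hxA, ?_⟩
      · have := (symp x a).val_lt
        rw [hj, hp2] at this
        exact lt_of_mul_lt_mul_left this (Nat.zero_le p)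
      · rw [show j * p = (symp x a).val from by rw [hj]; ring]
        exact (ZMod.natCast_rightInverse _).symm
    · rintro ⟨j, hj, hxA, hx⟩
      refine ⟨hxA, ?_⟩
      rw [ZMod.castHom_apply, ZMod.cast_eq_val, hx,
        ZMod.val_cast_of_lt (by rw [hp2]; exact (Nat.mul_lt_mul_right hp.pos).mpr hj),
        ZMod.natCast_eq_zero_iff]
      exact ⟨j, mul_comm j p⟩
  have hdisj : ∀ j1 ∈ Finset.range p, ∀ j2 ∈ Finset.range p, j1 ≠ j2 →
      Disjoint (A.filter (fun x => symp x a = ((j1 * p : ℕ) : ZMod (p^2))))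
        (A.filter (fun x => symp x a = ((j2 * p : ℕ) : ZMod (p^2)))) := by
    intro j1 hj1 j2 hj2 hne
    rw [Finset.disjoint_left]
    intro x hx1 hx2
    apply hne
    have h12 : ((j1 * p : ℕ) : ZMod (p^2)) = ((j2 * p : ℕ) : ZMod (p^2)) := by
      rw [← (Finset.mem_filter.mp hx1).2, (Finset.mem_filter.mp hx2).2]
    have hlt : ∀ j ∈ Finset.range p, j * p < p ^ 2 := by
      intro j hj
      rw [hp2]
      exact (Nat.mul_lt_mul_right hp.pos).mpr (Finset.mem_range.mp hj)
    have := congrArg ZMod.val h12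
    rw [ZMod.val_cast_of_lt (hlt j1 hj1), ZMod.val_cast_of_lt (hlt j2 hj2)] at this
    exact Nat.eq_of_mul_eq_mul_right hp.pos this
  have hcard := fiber_card p hp A hA a hphia
  rw [hunion, Finset.card_biUnion hdisj] at hcard
  exact (Finset.sum_congr rfl (fun j _ => rfl)).trans hcard

theorem stmt13 (p : ℕ) (hp : p.Prime) (A : Finset (G (p ^ 2)))
    (hA : IsTilingPairSub A (Hp p)) (h0 : (0 : G (p ^ 2)) ∈ A) :
    ∀ a ∈ A, sF A a ≠ 0 := by
  intro a haA hzero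
  haveI : NeZero (p^2) := ⟨pow_ne_zero _ hp.ne_zero⟩
  have hp2 : p ^ 2 = p * p := pow_two p
  have hp1 : 2 ≤ p := hp.two_le
  -- a ≠ 0
  have ha0 : a ≠ 0 := by
    rintro rfl
    have hcardA : sF A 0 = (A.card : ℂ) := by
      unfold sF
      rw [Finset.sum_congr rfl (fun x _ => ?_), Finset.sum_const, nsmul_eq_mul, mul_one]
      have hs : symp x (0 : G (p^2)) = 0 := by simp [symp]
      rw [hs, ZMod.val_zero]
      norm_num
    rw [hcardA] at hzero
    have : A.card = 0 := by exact_mod_cast hzero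
    rw [Finset.card_eq_zero] at this
    rw [this] at h0
    exact absurd h0 (Finset.notMem_empty _)
  -- a ∉ Hp p
  have haH : a ∉ Hp p := by
    intro haH
    apply ha0
    have h1 : ((a, (0 : G (p^2))) : G (p^2) × G (p^2)) = ((0 : G (p^2)), a) := (hA a).unique
      ⟨⟨haA, (Hp p).zero_mem⟩, add_zero a⟩ ⟨⟨h0, haH⟩, zero_add a⟩
    exact (Prod.ext_iff.mp h1).1
  have hphia : phi p a ≠ 0 := fun h => haH ((mem_Hp_iff p hp a).mpr h)
  -- the vanishing sum
  have hz := sF_eq_sum_mu p hp A a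
  rw [hzero] at hz
  have hconst := mu_const p hp (mu A a) hz.symm
  set M := p ^ 2 - p with hM
  have hMpos : 0 < M := by
    rw [hM]
    have : p < p ^ 2 := by nlinarith
    omega
  have hMeq : M = (p - 1) * p := by rw [hM, hp2, Nat.sub_one_mul]
  -- each mu (j*p) = mu M
  have hjp : ∀ j < p, mu A a (j * p) = mu A a M := by
    intro j hj
    rcases Nat.lt_or_ge j (p - 1) with h | h
    · have hlt : j * p < M := by
        rw [hMeq]
        exact (Nat.mul_lt_mul_right hp.pos).mpr h
      have := hconst (j * p) hlt
      rwa [Nat.mul_mod_left, Nat.add_zero] at this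
    · have : j = p - 1 := by omega
      rw [this, ← hMeq]
  -- the count
  have hcount := count_lemma p hp A hA a hphia
  rw [Finset.sum_congr rfl (fun j hj => hjp j (Finset.mem_range.mp hj)),
    Finset.sum_const, Finset.card_range, smul_eq_mul] at hcount
  -- mu 0 ≥ 2
  have hmu0 : mu A a 0 = mu A a M := by
    have := hconst 0 hMpos
    rwa [Nat.zero_mod, Nat.add_zero] at this
  have hmu2 : 2 ≤ mu A a 0 := by
    have h0' : (0 : G (p^2)) ∈ A.filter (fun x => symp x a = ((0 : ℕ) : ZMod (p^2))) := by
      simp [symp, h0]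
    have ha' : a ∈ A.filter (fun x => symp x a = ((0 : ℕ) : ZMod (p^2))) := by
      simp only [Finset.mem_filter]
      refine ⟨haA, ?_⟩
      simp [symp, mul_comm]
    have := Finset.one_lt_card.mpr ⟨0, h0', a, ha', ha0.symm⟩
    unfold mu nu
    omega
  rw [hmu0] at hmu2
  have : p * 2 ≤ p * mu A a M := Nat.mul_le_mul_left p hmu2
  omega
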